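/- Let d ≥ 2, let P be a d×d symmetric positive definite matrix with eigenvalues σ_1 ≥ ⋯ ≥ σ_d > 0 and orthonormal eigenvectors u_1,…,u_d, let g be a nonzero vector in span{u_1, u_2}, g̃ = g/√(gᵀPg), and P' = (d²/(d²−1))(P − (2/(d+1)) P g̃ g̃ᵀ P). Let σ^{new}_1 ≥ ⋯ ≥ σ^{new}_d be the ordered eigenvalues of P', and define the ratios D = σ_2/σ_d and D' = σ^{new}_2/σ^{new}_d. Then D' ≤ ((d+1)/(d−1)) · D, and moreover if D > (d+1)/(d−1) then D' ≤ D. -/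

import Mathlib

open Matrix

section Aux

variable {d : ℕ}

lemma mySumMulVec (A : Fin d → Matrix (Fin d) (Fin d) ℝ) (y : Fin d → ℝ) :
    (∑ i, A i) *ᵥ y = ∑ i, A i *ᵥ y := by
  ext j
  simp [mulVec, dotProduct, Matrix.sum_apply, Finset.sum_mul, Finset.sum_apply]
  exact Finset.sum_comm

lemma myDotSum (x : Fin d → ℝ) (v : Fin d → Fin d → ℝ) :
    x ⬝ᵥ (∑ i, v i) = ∑ i, x ⬝ᵥ v i := by
  simp [dotProduct, Finset.sum_apply, Finset.mul_sum]
  exact Finset.sum_comm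

lemma myVmvMulVec (a b y : Fin d → ℝ) : (vecMulVec a b) *ᵥ y = (b ⬝ᵥ y) • a := by
  ext j
  simp [mulVec, dotProduct, vecMulVec_apply, Finset.sum_mul, Finset.mul_sum]
  congr 1; ext k; ring

lemma myQuad (σ : Fin d → ℝ) (u : Fin d → Fin d → ℝ) (x y : Fin d → ℝ) :
    x ⬝ᵥ ((∑ i, σ i • vecMulVec (u i) (u i)) *ᵥ y) = ∑ i, σ i * (u i ⬝ᵥ x) * (u i ⬝ᵥ y) := by
  rw [mySumMulVec, myDotSum]
  refine Finset.sum_congr rfl fun i _ => ?_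
  rw [smul_mulVec, myVmvMulVec, dotProduct_smul, dotProduct_smul]
  simp only [smul_eq_mul]
  rw [dotProduct_comm (u i) x, dotProduct_comm (u i) y]
  ring

lemma myParseval (u : Fin d → Fin d → ℝ)
    (horth : ∀ i j, u i ⬝ᵥ u j = if i = j then (1 : ℝ) else 0) (x : Fin d → ℝ) :
    ∑ i, (u i ⬝ᵥ x) ^ 2 = x ⬝ᵥ x := by
  have hU : ∀ j k, (∑ i, u i j * u i k) = if j = k then (1 : ℝ) else 0 := by
    have h1 : (Matrix.of u) * (Matrix.of u)ᵀ = 1 := by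
      ext i j
      simpa [Matrix.mul_apply, dotProduct, Matrix.one_apply] using horth i j
    have h2 : (Matrix.of u)ᵀ * (Matrix.of u) = 1 := mul_eq_one_comm.mp h1
    intro j k
    have := congrFun (congrFun h2 j) k
    simpa [Matrix.mul_apply, Matrix.transpose_apply, Matrix.one_apply] using this
  have key : ∑ i, (u i ⬝ᵥ x) ^ 2 = ∑ j, ∑ k, (x j * x k) * ∑ i, u i j * u i k := by
    simp only [dotProduct, sq, Finset.sum_mul_sum, Finset.mul_sum]
    rw [Finset.sum_comm]
    refine Finset.sum_congr rfl fun j _ => ?_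
    rw [Finset.sum_comm]
    refine Finset.sum_congr rfl fun k _ => ?_
    rw [Finset.sum_mul]
    exact Finset.sum_congr rfl fun i _ => by ring
  rw [key]
  simp only [hU, mul_ite, mul_one, mul_zero]
  simp [dotProduct, Finset.sum_ite_eq, sq]

end Aux

set_option maxHeartbeats 1000000

/-- Evolution of the eigenvalue ratio `D = σ₂/σ_d` under the central-cut
ellipsoid update. `σ'` denotes the ordered (decreasing) eigenvalues of `P'`. -/
theorem stmt5 (d : ℕ) (hd : 2 ≤ d)
    (P : Matrix (Fin d) (Fin d) ℝ)
    (σ : Fin d → ℝ) (u : Fin d → Fin d → ℝ)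
    (horth : ∀ i j, u i ⬝ᵥ u j = if i = j then (1 : ℝ) else 0)
    (hdecr : ∀ i j : Fin d, i ≤ j → σ j ≤ σ i)
    (hpos : ∀ i, 0 < σ i)
    (hP : P = ∑ i, σ i • vecMulVec (u i) (u i))
    (g : Fin d → ℝ) (hg : g ≠ 0)
    (hspan : ∃ a b : ℝ, g = a • u ⟨0, by omega⟩ + b • u ⟨1, by omega⟩)
    (gt : Fin d → ℝ) (hgt : gt = (Real.sqrt (g ⬝ᵥ (P *ᵥ g)))⁻¹ • g)
    (P' : Matrix (Fin d) (Fin d) ℝ)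
    (hP' : P' = ((d : ℝ)^2 / ((d : ℝ)^2 - 1)) •
      (P - (2 / ((d : ℝ) + 1)) • (P * vecMulVec gt gt * P)))
    (σ' : Fin d → ℝ) (u' : Fin d → Fin d → ℝ)
    (horth' : ∀ i j, u' i ⬝ᵥ u' j = if i = j then (1 : ℝ) else 0)
    (hdecr' : ∀ i j : Fin d, i ≤ j → σ' j ≤ σ' i)
    (hP'decomp : P' = ∑ i, σ' i • vecMulVec (u' i) (u' i)) :
    σ' ⟨1, by omega⟩ / σ' ⟨d - 1, by omega⟩
      ≤ (((d : ℝ) + 1) / ((d : ℝ) - 1)) * (σ ⟨1, by omega⟩ / σ ⟨d - 1, by omega⟩) ∧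
    (σ ⟨1, by omega⟩ / σ ⟨d - 1, by omega⟩ > ((d : ℝ) + 1) / ((d : ℝ) - 1) →
      σ' ⟨1, by omega⟩ / σ' ⟨d - 1, by omega⟩ ≤ σ ⟨1, by omega⟩ / σ ⟨d - 1, by omega⟩) := by
  obtain ⟨a, b, hab⟩ := hspan
  have hd1 : 1 < d := by omega
  set i0 : Fin d := ⟨0, by omega⟩ with hi0def
  set i1 : Fin d := ⟨1, by omega⟩ with hi1def
  set il : Fin d := ⟨d - 1, by omega⟩ with hildef
  have hdR : (2:ℝ) ≤ (d:ℝ) := by exact_mod_cast hd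
  set cc : ℝ := (d:ℝ)^2 / ((d:ℝ)^2 - 1) with hcc
  set β : ℝ := 2 / ((d:ℝ) + 1) with hβ
  have hc0 : 0 < cc := by
    rw [hcc]; apply div_pos <;> nlinarith
  have hβ0 : 0 < β := by rw [hβ]; positivity
  have hβ1 : β < 1 := by rw [hβ, div_lt_one (by linarith)]; linarith
  have h1β : 1 - β = ((d:ℝ) - 1)/((d:ℝ) + 1) := by
    rw [hβ]; field_simp; ring
  -- index facts
  have hi01 : i0 ≠ i1 := by
    simp [hi0def, hi1def, Fin.ext_iff]
  have hi0le1 : i0 ≤ i1 := by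
    rw [Fin.le_def]; norm_num [hi0def, hi1def]
  have hle_l : ∀ i : Fin d, i ≤ il := fun i => by
    rw [Fin.le_def]; have := i.isLt; simp [hildef]; omega
  have hσl : ∀ i, σ il ≤ σ i := fun i => hdecr i il (hle_l i)
  have h1le : ∀ i : Fin d, i ≠ i0 → i1 ≤ i := by
    intro i hi
    rw [Fin.le_def]
    have h := i.isLt
    have : (i : ℕ) ≠ 0 := by simpa [Fin.ext_iff, hi0def] using hi
    simp [hi1def]; omega
  have hpair : ({i0, i1} : Finset (Fin d)) ⊆ Finset.univ := Finset.subset_univ _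
  -- quadratic forms
  have hQP : ∀ x y : Fin d → ℝ, x ⬝ᵥ (P *ᵥ y) = ∑ i, σ i * (u i ⬝ᵥ x) * (u i ⬝ᵥ y) := by
    intro x y; rw [hP, myQuad]
  have hQP'd : ∀ x y : Fin d → ℝ, x ⬝ᵥ (P' *ᵥ y) = ∑ i, σ' i * (u' i ⬝ᵥ x) * (u' i ⬝ᵥ y) := by
    intro x y; rw [hP'decomp, myQuad]
  have hsym : ∀ x y : Fin d → ℝ, x ⬝ᵥ (P *ᵥ y) = y ⬝ᵥ (P *ᵥ x) := by
    intro x y; rw [hQP, hQP]; exact Finset.sum_congr rfl fun i _ => by ring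
  -- coordinates of g and gt
  have hgcoord : ∀ i, u i ⬝ᵥ g = (if i = i0 then a else 0) + (if i = i1 then b else 0) := by
    intro i
    rw [hab]
    simp [dotProduct_add, dotProduct_smul, horth, mul_ite, hi0def, hi1def]
  set r : ℝ := (Real.sqrt (g ⬝ᵥ (P *ᵥ g)))⁻¹ with hr
  have hgt' : gt = r • g := hgt
  have hgt_out : ∀ i, i ≠ i0 → i ≠ i1 → u i ⬝ᵥ gt = 0 := by
    intro i h0 h1
    rw [hgt', dotProduct_smul, hgcoord]
    simp [h0, h1]
  -- positivity of g ⬝ᵥ P g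
  have hgg : 0 < g ⬝ᵥ g := by
    have h0 : 0 ≤ g ⬝ᵥ g := by
      show 0 ≤ ∑ i, g i * g i
      exact Finset.sum_nonneg fun i _ => mul_self_nonneg (g i)
    rcases h0.lt_or_eq with h | h
    · exact h
    · exact absurd (dotProduct_self_eq_zero.mp h.symm) hg
  have hgPg : 0 < g ⬝ᵥ (P *ᵥ g) := by
    have h1 : σ il * (g ⬝ᵥ g) ≤ g ⬝ᵥ (P *ᵥ g) := by
      rw [hQP, ← myParseval u horth g, Finset.mul_sum]
      refine Finset.sum_le_sum fun i _ => ?_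
      nlinarith [sq_nonneg (u i ⬝ᵥ g), hσl i]
    nlinarith [mul_pos (hpos il) hgg]
  have hnorm : gt ⬝ᵥ (P *ᵥ gt) = 1 := by
    rw [hgt', mulVec_smul, smul_dotProduct, dotProduct_smul]
    simp only [smul_eq_mul]
    rw [hr]
    have hs := Real.sqrt_pos.mpr hgPg
    have hms := Real.mul_self_sqrt hgPg.le
    field_simp
    rw [sq, hms]
  -- reduction of gt ⬝ᵥ P x to two terms
  have ht : ∀ x : Fin d → ℝ, gt ⬝ᵥ (P *ᵥ x) =
      σ i0 * (u i0 ⬝ᵥ gt) * (u i0 ⬝ᵥ x) + σ i1 * (u i1 ⬝ᵥ gt) * (u i1 ⬝ᵥ x) := by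
    intro x
    rw [hQP]
    have hzero : ∀ i ∈ Finset.univ, i ∉ ({i0, i1} : Finset (Fin d)) →
        σ i * (u i ⬝ᵥ gt) * (u i ⬝ᵥ x) = 0 := by
      intro i _ hi
      have h0 : i ≠ i0 := fun h => hi (by simp [h])
      have h1 : i ≠ i1 := fun h => hi (by simp [h])
      rw [hgt_out i h0 h1]; ring
    rw [← Finset.sum_subset hpair hzero, Finset.sum_pair hi01]
  have hnorm2 : σ i0 * (u i0 ⬝ᵥ gt)^2 + σ i1 * (u i1 ⬝ᵥ gt)^2 = 1 := by
    have h := ht gt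
    rw [hnorm] at h
    linear_combination -h
  -- Cauchy-Schwarz
  have hCS : ∀ x : Fin d → ℝ, (gt ⬝ᵥ (P *ᵥ x))^2 ≤
      σ i0 * (u i0 ⬝ᵥ x)^2 + σ i1 * (u i1 ⬝ᵥ x)^2 := by
    intro x
    rw [ht]
    have expand : σ i0 * (u i0 ⬝ᵥ x)^2 + σ i1 * (u i1 ⬝ᵥ x)^2
        - (σ i0 * (u i0 ⬝ᵥ gt) * (u i0 ⬝ᵥ x) + σ i1 * (u i1 ⬝ᵥ gt) * (u i1 ⬝ᵥ x))^2
        = (σ i0 * (u i0 ⬝ᵥ x)^2 + σ i1 * (u i1 ⬝ᵥ x)^2)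
            * (1 - (σ i0 * (u i0 ⬝ᵥ gt)^2 + σ i1 * (u i1 ⬝ᵥ gt)^2))
          + σ i0 * σ i1 * ((u i0 ⬝ᵥ gt) * (u i1 ⬝ᵥ x) - (u i1 ⬝ᵥ gt) * (u i0 ⬝ᵥ x))^2 := by
      ring
    have h2 : (0:ℝ) ≤ σ i0 * σ i1 *
        ((u i0 ⬝ᵥ gt) * (u i1 ⬝ᵥ x) - (u i1 ⬝ᵥ gt) * (u i0 ⬝ᵥ x))^2 := by
      have := mul_pos (hpos i0) (hpos i1)
      positivity
    rw [hnorm2] at expand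
    nlinarith [expand, h2]
  have hlow : ∀ x : Fin d → ℝ, (gt ⬝ᵥ (P *ᵥ x))^2 ≤ x ⬝ᵥ (P *ᵥ x) := by
    intro x
    refine (hCS x).trans ?_
    rw [hQP]
    have hpairsum : σ i0 * (u i0 ⬝ᵥ x)^2 + σ i1 * (u i1 ⬝ᵥ x)^2 =
        ∑ i ∈ ({i0, i1} : Finset (Fin d)), σ i * (u i ⬝ᵥ x) * (u i ⬝ᵥ x) := by
      rw [Finset.sum_pair hi01]; ring
    rw [hpairsum]
    refine Finset.sum_le_sum_of_subset_of_nonneg hpair fun i _ _ => ?_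
    have h := mul_nonneg (hpos i).le (mul_self_nonneg (u i ⬝ᵥ x))
    linarith [mul_assoc (σ i) (u i ⬝ᵥ x) (u i ⬝ᵥ x)]
  -- eigenvalue extraction
  have hQ'val : ∀ j, u' j ⬝ᵥ (P' *ᵥ u' j) = σ' j := by
    intro j
    rw [hQP'd]
    simp [horth', mul_ite, ite_mul, Finset.sum_ite_eq']
  -- formula for the quadratic form of P'
  have hQ'form : ∀ x : Fin d → ℝ,
      x ⬝ᵥ (P' *ᵥ x) = cc * (x ⬝ᵥ (P *ᵥ x) - β * (gt ⬝ᵥ (P *ᵥ x))^2) := by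
    intro x
    rw [hP', smul_mulVec, dotProduct_smul, sub_mulVec, smul_mulVec,
      dotProduct_sub, dotProduct_smul]
    simp only [smul_eq_mul]
    have hm : (P * vecMulVec gt gt * P) *ᵥ x = (gt ⬝ᵥ (P *ᵥ x)) • (P *ᵥ gt) := by
      rw [← mulVec_mulVec, ← mulVec_mulVec, myVmvMulVec, mulVec_smul]
    rw [hm, dotProduct_smul]
    simp only [smul_eq_mul]
    rw [hsym x gt]
    ring
  -- lower bound for the smallest eigenvalue
  have hee : u' il ⬝ᵥ u' il = 1 := by simpa using horth' il il
  have heq : σ' il = cc * (u' il ⬝ᵥ (P *ᵥ u' il) - β * (gt ⬝ᵥ (P *ᵥ u' il))^2) := by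
    rw [← hQ'val il, hQ'form]
  have hQlow : σ il ≤ u' il ⬝ᵥ (P *ᵥ u' il) := by
    have h1 : σ il * (u' il ⬝ᵥ u' il) ≤ u' il ⬝ᵥ (P *ᵥ u' il) := by
      rw [hQP, ← myParseval u horth (u' il), Finset.mul_sum]
      refine Finset.sum_le_sum fun i _ => ?_
      nlinarith [sq_nonneg (u i ⬝ᵥ u' il), hσl i]
    rw [hee, mul_one] at h1
    exact h1
  have hlast : cc * ((1 - β) * σ il) ≤ σ' il := by
    rw [heq]
    have h2 := hlow (u' il)
    have hX : (1 - β) * σ il ≤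
        u' il ⬝ᵥ (P *ᵥ u' il) - β * (gt ⬝ᵥ (P *ᵥ u' il))^2 := by
      nlinarith [mul_nonneg hβ0.le (sub_nonneg.mpr h2),
        mul_nonneg (sub_nonneg.mpr hβ1.le) (sub_nonneg.mpr hQlow)]
    exact mul_le_mul_of_nonneg_left hX hc0.le
  have hlpos : 0 < σ' il := by
    have : 0 < cc * ((1 - β) * σ il) := by
      apply mul_pos hc0
      apply mul_pos (by linarith) (hpos il)
    linarith
  -- conditional sharper lower bound
  have hlastB : ((d:ℝ) + 1) / ((d:ℝ) - 1) < σ i1 / σ il → cc * σ il ≤ σ' il := by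
    intro hyp
    rw [div_lt_div_iff₀ (by linarith) (hpos il)] at hyp
    have hcond : σ il ≤ (1 - β) * σ i1 := by
      rw [h1β, div_mul_eq_mul_div, le_div_iff₀ (by linarith : (0:ℝ) < (d:ℝ) + 1)]
      nlinarith
    rw [heq]
    have hcs := hCS (u' il)
    have hsplitσ : ∑ i, σ i * (u i ⬝ᵥ u' il) * (u i ⬝ᵥ u' il) =
        (σ i0 * (u i0 ⬝ᵥ u' il) * (u i0 ⬝ᵥ u' il)
          + σ i1 * (u i1 ⬝ᵥ u' il) * (u i1 ⬝ᵥ u' il))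
        + ∑ i ∈ Finset.univ \ ({i0, i1} : Finset (Fin d)),
            σ i * (u i ⬝ᵥ u' il) * (u i ⬝ᵥ u' il) := by
      rw [← Finset.sum_sdiff hpair, Finset.sum_pair hi01]; ring
    have hsplit1 : ∑ i, (u i ⬝ᵥ u' il)^2 =
        ((u i0 ⬝ᵥ u' il)^2 + (u i1 ⬝ᵥ u' il)^2)
        + ∑ i ∈ Finset.univ \ ({i0, i1} : Finset (Fin d)), (u i ⬝ᵥ u' il)^2 := by
      rw [← Finset.sum_sdiff hpair, Finset.sum_pair hi01]; ring
    have hdiff : σ il * (∑ i ∈ Finset.univ \ ({i0, i1} : Finset (Fin d)), (u i ⬝ᵥ u' il)^2)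
        ≤ ∑ i ∈ Finset.univ \ ({i0, i1} : Finset (Fin d)),
            σ i * (u i ⬝ᵥ u' il) * (u i ⬝ᵥ u' il) := by
      rw [Finset.mul_sum]
      refine Finset.sum_le_sum fun i _ => ?_
      nlinarith [sq_nonneg (u i ⬝ᵥ u' il), hσl i]
    have hParse : ∑ i, (u i ⬝ᵥ u' il)^2 = 1 := by
      rw [myParseval u horth (u' il), hee]
    have hkey : σ il ≤ u' il ⬝ᵥ (P *ᵥ u' il) - β * (gt ⬝ᵥ (P *ᵥ u' il))^2 := by
      rw [hQP]
      have t1 : β * (gt ⬝ᵥ (P *ᵥ u' il))^2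
          ≤ β * (σ i0 * (u i0 ⬝ᵥ u' il)^2 + σ i1 * (u i1 ⬝ᵥ u' il)^2) :=
        mul_le_mul_of_nonneg_left hcs hβ0.le
      have h01 : σ i1 ≤ σ i0 := hdecr i0 i1 hi0le1
      have t2 : (1 - β) * σ i1 * ((u i0 ⬝ᵥ u' il)^2 + (u i1 ⬝ᵥ u' il)^2)
          ≤ (1 - β) * (σ i0 * (u i0 ⬝ᵥ u' il)^2 + σ i1 * (u i1 ⬝ᵥ u' il)^2) := by
        nlinarith [mul_nonneg (mul_nonneg (sub_nonneg.mpr hβ1.le)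
          (sub_nonneg.mpr h01)) (sq_nonneg (u i0 ⬝ᵥ u' il))]
      have t3 : σ il * ((u i0 ⬝ᵥ u' il)^2 + (u i1 ⬝ᵥ u' il)^2)
          ≤ (1 - β) * σ i1 * ((u i0 ⬝ᵥ u' il)^2 + (u i1 ⬝ᵥ u' il)^2) := by
        apply mul_le_mul_of_nonneg_right hcond
        positivity
      have hfin : σ il = σ il * ((u i0 ⬝ᵥ u' il)^2 + (u i1 ⬝ᵥ u' il)^2)
          + σ il * (∑ i ∈ Finset.univ \ ({i0, i1} : Finset (Fin d)), (u i ⬝ᵥ u' il)^2) := by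
        rw [← mul_add, ← hsplit1, hParse, mul_one]
      rw [hsplitσ]
      linarith [t1, t2, t3, hdiff, hfin]
    have : σ il ≤ u' il ⬝ᵥ (P *ᵥ u' il) - β * (gt ⬝ᵥ (P *ᵥ u' il))^2 := hkey
    exact mul_le_mul_of_nonneg_left this hc0.le
  -- upper bound for the second eigenvalue
  have hupper : σ' i1 ≤ cc * σ i1 := by
    obtain ⟨α, γ, hcst, hαγ⟩ : ∃ α γ : ℝ,
        α * (u i0 ⬝ᵥ u' i0) + γ * (u i0 ⬝ᵥ u' i1) = 0 ∧ 0 < α^2 + γ^2 := by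
      by_cases hpq : u i0 ⬝ᵥ u' i0 = 0 ∧ u i0 ⬝ᵥ u' i1 = 0
      · exact ⟨1, 0, by rw [hpq.1, hpq.2]; ring, by norm_num⟩
      · refine ⟨u i0 ⬝ᵥ u' i1, -(u i0 ⬝ᵥ u' i0), by ring, ?_⟩
        rcases not_and_or.mp hpq with h | h
        · have := sq_pos_iff.mpr h
          nlinarith [sq_nonneg (u i0 ⬝ᵥ u' i1)]
        · have := sq_pos_iff.mpr h
          nlinarith [sq_nonneg (u i0 ⬝ᵥ u' i0)]
    set x : Fin d → ℝ := α • u' i0 + γ • u' i1 with hx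
    have hux : ∀ i, u' i ⬝ᵥ x = (if i = i0 then α else 0) + (if i = i1 then γ else 0) := by
      intro i
      rw [hx]
      simp [dotProduct_add, dotProduct_smul, horth', mul_ite]
    have hQ'x : x ⬝ᵥ (P' *ᵥ x) = σ' i0 * α^2 + σ' i1 * γ^2 := by
      rw [hQP'd]
      have hterm : ∀ i, σ' i * (u' i ⬝ᵥ x) * (u' i ⬝ᵥ x) =
          (if i = i0 then σ' i0 * α^2 else 0) + (if i = i1 then σ' i1 * γ^2 else 0) := by
        intro i
        rw [hux i]
        by_cases h0 : i = i0
        · subst h0; simp [hi01]; ring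
        · by_cases h1 : i = i1
          · subst h1; simp [h0]; ring
          · simp [h0, h1]
      rw [Finset.sum_congr rfl fun i _ => hterm i, Finset.sum_add_distrib]
      simp [Finset.sum_ite_eq']
    have hxx : x ⬝ᵥ x = α^2 + γ^2 := by
      rw [hx]
      simp [dotProduct_add, add_dotProduct, dotProduct_smul, smul_dotProduct,
        horth', hi01, Ne.symm hi01]
      ring
    have hx0 : u i0 ⬝ᵥ x = 0 := by
      rw [hx]
      simpa [dotProduct_add, dotProduct_smul] using hcst
    have hub : x ⬝ᵥ (P *ᵥ x) ≤ σ i1 * (x ⬝ᵥ x) := by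
      rw [hQP, ← myParseval u horth x, Finset.mul_sum]
      refine Finset.sum_le_sum fun i _ => ?_
      by_cases h0 : i = i0
      · subst h0; rw [hx0]; simp
      · have h := hdecr i1 i (h1le i h0)
        nlinarith [sq_nonneg (u i ⬝ᵥ x)]
    have l1 : σ' i1 * (α^2 + γ^2) ≤ σ' i0 * α^2 + σ' i1 * γ^2 := by
      have h := hdecr' i0 i1 hi0le1
      nlinarith [sq_nonneg α]
    have l2 : x ⬝ᵥ (P' *ᵥ x) ≤ cc * (x ⬝ᵥ (P *ᵥ x)) := by
      rw [hQ'form]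
      have hnn : (0:ℝ) ≤ β * (gt ⬝ᵥ (P *ᵥ x))^2 := by positivity
      apply mul_le_mul_of_nonneg_left (by linarith) hc0.le
    have l3 : cc * (x ⬝ᵥ (P *ᵥ x)) ≤ cc * (σ i1 * (x ⬝ᵥ x)) :=
      mul_le_mul_of_nonneg_left hub hc0.le
    have hchain : σ' i1 * (α^2 + γ^2) ≤ cc * σ i1 * (α^2 + γ^2) := by
      rw [hQ'x] at l2
      rw [hxx] at l3
      calc σ' i1 * (α^2 + γ^2) ≤ σ' i0 * α^2 + σ' i1 * γ^2 := l1
        _ ≤ cc * (x ⬝ᵥ (P *ᵥ x)) := l2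
        _ ≤ cc * (σ i1 * (α^2 + γ^2)) := l3
        _ = cc * σ i1 * (α^2 + γ^2) := by ring
    exact (mul_le_mul_iff_left₀ hαγ).mp hchain
  -- final assembly
  have hσ1pos := hpos i1
  have hσlpos := hpos il
  have hccne : cc ≠ 0 := ne_of_gt hc0
  have hd1R : (0:ℝ) < (d:ℝ) - 1 := by linarith
  have hd1R' : (0:ℝ) < (d:ℝ) + 1 := by linarith
  refine ⟨?_, ?_⟩
  · show σ' i1 / σ' il ≤ (((d:ℝ) + 1) / ((d:ℝ) - 1)) * (σ i1 / σ il)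
    have hden : 0 < cc * ((1 - β) * σ il) := by
      apply mul_pos hc0 (mul_pos (by linarith) hσlpos)
    calc σ' i1 / σ' il ≤ (cc * σ i1) / (cc * ((1 - β) * σ il)) :=
          div_le_div₀ (by positivity) hupper hden hlast
      _ = (((d:ℝ) + 1) / ((d:ℝ) - 1)) * (σ i1 / σ il) := by
          rw [h1β]
          field_simp
  · intro hyp
    show σ' i1 / σ' il ≤ σ i1 / σ il
    have h3 := hlastB hyp
    have hden : 0 < cc * σ il := mul_pos hc0 hσlpos
    calc σ' i1 / σ' il ≤ (cc * σ i1) / (cc * σ il) :=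
          div_le_div₀ (by positivity) hupper hden h3
      _ = σ i1 / σ il := mul_div_mul_left _ _ hccne
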